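/- arXiv:1707.05186 — 4 statements merged into one kernel-verified Lean document; each statement's English description precedes it below -/
import Mathlib

section
/- Let G be an n-vertex graph with maximum degree at most Δ. Then for every k ≥ 1, the number of vertex subsets S of G with |S| = k and G[S] connected is at most n·(eΔ)^{k-1}. -/
open SimpleGraph


namespace ConnCount

variable {V : Type} [DecidableEq V] {Δ : ℕ}

/-- Processing one neighbor slot during BFS encoding. -/
def fE (nb : V → Fin Δ → Option V) (S : Finset V) (u : V) (m : ℕ)
    (st : List V × List (ℕ × ℕ)) (j : Fin Δ) : List V × List (ℕ × ℕ) :=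
  match nb u j with
  | some w => if w ∈ S ∧ w ∉ st.1 then (st.1 ++ [w], st.2 ++ [(m, j.1)]) else st
  | none => st

/-- BFS exploration: first component is the discovery list, second the event list. -/
def disc (nb : V → Fin Δ → Option V) (S : Finset V) (v : V) : ℕ → List V × List (ℕ × ℕ)
  | 0 => ([v], [])
  | m+1 =>
    let st := disc nb S v m
    if h : m < st.1.length then
      List.foldl (fE nb S (st.1[m]'h) m) st (List.finRange Δ)
    else st

/-- Decoding from the event set. -/
def dec (nb : V → Fin Δ → Option V) (A : Finset (ℕ × ℕ)) (v : V) : ℕ → List V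
  | 0 => [v]
  | m+1 =>
    let D := dec nb A v m
    if h : m < D.length then
      D ++ (List.finRange Δ).filterMap
        (fun j => if (m, j.1) ∈ A then nb (D[m]'h) j else none)
    else D

lemma foldSpec (nb : V → Fin Δ → Option V) (S : Finset V) (u : V) (m : ℕ)
    (js : List (Fin Δ)) :
    ∀ D E, D.Nodup → js.Nodup →
    ∃ L M, List.foldl (fE nb S u m) (D, E) js = (D ++ L, E ++ M) ∧
      L.length = M.length ∧
      (∀ p ∈ M, p.1 = m ∧ ∃ j ∈ js, p.2 = j.1) ∧
      M.Nodup ∧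
      (∀ w ∈ L, w ∈ S) ∧
      (D ++ L).Nodup ∧
      L = js.filterMap (fun j => if (m, j.1) ∈ M then nb u j else none) ∧
      (∀ j ∈ js, ∀ w, nb u j = some w → w ∈ S → w ∈ D ++ L) := by
  induction js with
  | nil =>
    intro D E hD _
    exact ⟨[], [], by simp, by simp, by simp, by simp, by simp, by simpa, by simp, by simp⟩
  | cons j rest ih =>
    intro D E hD hjs
    have hjrest : j ∉ rest := (List.nodup_cons.mp hjs).1
    have hrest : rest.Nodup := (List.nodup_cons.mp hjs).2
    rw [List.foldl_cons]
    cases hnbj : nb u j with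
    | none =>
      have hst : fE nb S u m (D, E) j = (D, E) := by simp [fE, hnbj]
      rw [hst]
      obtain ⟨L, M, h1, h2, h3, h4, h5, h6, h7, h8⟩ := ih D E hD hrest
      have hMj : (m, j.1) ∉ M := by
        intro hmem
        obtain ⟨-, j', hj', hj'eq⟩ := h3 _ hmem
        have : j' = j := Fin.val_injective hj'eq.symm
        exact hjrest (this ▸ hj')
      refine ⟨L, M, h1, h2, ?_, h4, h5, h6, ?_, ?_⟩
      · exact fun p hp => ⟨(h3 p hp).1, by obtain ⟨-, j', hj', he⟩ := h3 p hp; exact ⟨j', List.mem_cons_of_mem _ hj', he⟩⟩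
      · rw [List.filterMap_cons]
        simp only [hnbj, hMj, if_neg, ite_self]
        exact h7
      · intro j' hj' w hw hwS
        rcases List.mem_cons.mp hj' with rfl | hj'
        · rw [hnbj] at hw; cases hw
        · exact h8 j' hj' w hw hwS
    | some w =>
      by_cases hw : w ∈ S ∧ w ∉ D
      · have hst : fE nb S u m (D, E) j = (D ++ [w], E ++ [(m, j.1)]) := by
          simp [fE, hnbj, hw]
        rw [hst]
        have hDw : (D ++ [w]).Nodup := by
          rw [List.nodup_append]
          exact ⟨hD, List.nodup_singleton w, by simpa using fun (a : V) (ha : a ∈ D) (h : a = w) => hw.2 (h ▸ ha)⟩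
        obtain ⟨L, M, h1, h2, h3, h4, h5, h6, h7, h8⟩ := ih (D ++ [w]) (E ++ [(m, j.1)]) hDw hrest
        have hMj : (m, j.1) ∉ M := by
          intro hmem
          obtain ⟨-, j', hj', hj'eq⟩ := h3 _ hmem
          have : j' = j := Fin.val_injective hj'eq.symm
          exact hjrest (this ▸ hj')
        refine ⟨w :: L, (m, j.1) :: M, ?_, by simpa using h2, ?_, ?_, ?_, ?_, ?_, ?_⟩
        · rw [h1]; simp
        · intro p hp
          rcases List.mem_cons.mp hp with rfl | hp
          · exact ⟨rfl, j, List.mem_cons_self, rfl⟩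
          · obtain ⟨he, j', hj', heq⟩ := h3 p hp
            exact ⟨he, j', List.mem_cons_of_mem _ hj', heq⟩
        · exact List.nodup_cons.mpr ⟨hMj, h4⟩
        · intro x hx
          rcases List.mem_cons.mp hx with rfl | hx
          · exact hw.1
          · exact h5 x hx
        · simpa using h6
        · rw [List.filterMap_cons]
          have hcond : (m, j.1) ∈ (m, j.1) :: M := List.mem_cons_self
          simp only [if_pos hcond, hnbj]
          congr 1
          rw [h7]
          apply List.filterMap_congr
          intro j' hj'
          have hne : j'.1 ≠ j.1 := fun h => hjrest ((Fin.val_injective h) ▸ hj')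
          have : ((m, j'.1) ∈ (m, j.1) :: M) ↔ ((m, j'.1) ∈ M) := by
            simp [List.mem_cons, Prod.ext_iff, hne]
          rw [if_congr this rfl rfl]
        · intro j' hj' w' hw' hw'S
          rcases List.mem_cons.mp hj' with rfl | hj'
          · rw [hnbj] at hw'
            obtain rfl : w = w' := by injection hw'
            simp
          · have := h8 j' hj' w' hw' hw'S
            simpa using this
      · have hst : fE nb S u m (D, E) j = (D, E) := by
          simp only [fE, hnbj]; rw [if_neg hw]
        rw [hst]
        obtain ⟨L, M, h1, h2, h3, h4, h5, h6, h7, h8⟩ := ih D E hD hrest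
        have hMj : (m, j.1) ∉ M := by
          intro hmem
          obtain ⟨-, j', hj', hj'eq⟩ := h3 _ hmem
          have : j' = j := Fin.val_injective hj'eq.symm
          exact hjrest (this ▸ hj')
        refine ⟨L, M, h1, h2, ?_, h4, h5, h6, ?_, ?_⟩
        · exact fun p hp => ⟨(h3 p hp).1, by obtain ⟨-, j', hj', he⟩ := h3 p hp; exact ⟨j', List.mem_cons_of_mem _ hj', he⟩⟩
        · rw [List.filterMap_cons]
          simp only [if_neg hMj]
          exact h7
        · intro j' hj' w' hw' hw'S
          rcases List.mem_cons.mp hj' with rfl | hj'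
          · rw [hnbj] at hw'
            obtain rfl : w = w' := by injection hw'
            have hwD : w ∈ D := by
              by_contra hwD
              exact hw ⟨hw'S, hwD⟩
            exact List.mem_append_left _ hwD
          · exact h8 j' hj' w' hw' hw'S

variable (nb : V → Fin Δ → Option V) (S : Finset V) (v : V)

lemma disc_inv (hv : v ∈ S) (m : ℕ) :
    (disc nb S v m).1.Nodup ∧ (∀ w ∈ (disc nb S v m).1, w ∈ S) ∧
    (disc nb S v m).1.length = (disc nb S v m).2.length + 1 ∧
    (∀ p ∈ (disc nb S v m).2, p.1 < m ∧ p.2 < Δ) ∧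
    (disc nb S v m).2.Nodup := by
  induction m with
  | zero => simp [disc, hv]
  | succ m ih =>
    obtain ⟨hD, hDS, hlen, hEp, hEnd⟩ := ih
    rw [disc]
    by_cases h : m < (disc nb S v m).1.length
    · rw [dif_pos h]
      obtain ⟨L, M, h1, h2, h3, h4, h5, h6, h7, h8⟩ :=
        foldSpec nb S ((disc nb S v m).1[m]'h) m (List.finRange Δ)
          (disc nb S v m).1 (disc nb S v m).2 hD (List.nodup_finRange Δ)
      rw [h1]
      refine ⟨h6, ?_, ?_, ?_, ?_⟩
      · intro w hw
        rcases List.mem_append.mp hw with hw | hw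
        · exact hDS w hw
        · exact h5 w hw
      · simp only [List.length_append, h2, hlen]; omega
      · intro p hp
        rcases List.mem_append.mp hp with hp | hp
        · exact ⟨Nat.lt_succ_of_lt (hEp p hp).1, (hEp p hp).2⟩
        · obtain ⟨he, j, hj, hje⟩ := h3 p hp
          exact ⟨by omega, by rw [hje]; exact j.2⟩
      · refine hEnd.append h4 ?_
        intro p hpE hpM
        have := (hEp p hpE).1
        have := (h3 p hpM).1
        omega
    · rw [dif_neg h]
      exact ⟨hD, hDS, hlen, fun p hp => ⟨Nat.lt_succ_of_lt (hEp p hp).1, (hEp p hp).2⟩, hEnd⟩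

lemma disc_step (hv : v ∈ S) (m : ℕ) (h : m < (disc nb S v m).1.length) :
    ∃ L M, disc nb S v (m+1) = ((disc nb S v m).1 ++ L, (disc nb S v m).2 ++ M) ∧
      (∀ p ∈ M, p.1 = m) ∧
      L = (List.finRange Δ).filterMap
        (fun j => if (m, j.1) ∈ M then nb ((disc nb S v m).1[m]'h) j else none) ∧
      (∀ j : Fin Δ, ∀ w, nb ((disc nb S v m).1[m]'h) j = some w → w ∈ S →
        w ∈ (disc nb S v m).1 ++ L) := by
  obtain ⟨L, M, h1, h2, h3, h4, h5, h6, h7, h8⟩ :=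
    foldSpec nb S ((disc nb S v m).1[m]'h) m (List.finRange Δ)
      (disc nb S v m).1 (disc nb S v m).2 (disc_inv nb S v hv m).1 (List.nodup_finRange Δ)
  refine ⟨L, M, ?_, fun p hp => (h3 p hp).1, h7, ?_⟩
  · rw [disc, dif_pos h, h1]
  · intro j w hw hwS
    exact h8 j (List.mem_finRange j) w hw hwS

lemma disc_succ_prefix (hv : v ∈ S) (m : ℕ) :
    (disc nb S v m).1 <+: (disc nb S v (m+1)).1 ∧
    (disc nb S v m).2 <+: (disc nb S v (m+1)).2 := by
  by_cases h : m < (disc nb S v m).1.length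
  · obtain ⟨L, M, h1, -, -, -⟩ := disc_step nb S v hv m h
    rw [h1]
    exact ⟨⟨L, rfl⟩, ⟨M, rfl⟩⟩
  · rw [disc, dif_neg h]
    exact ⟨List.prefix_rfl, List.prefix_rfl⟩

lemma disc_prefix (hv : v ∈ S) {m m' : ℕ} (hmm : m ≤ m') :
    (disc nb S v m).1 <+: (disc nb S v m').1 ∧
    (disc nb S v m).2 <+: (disc nb S v m').2 := by
  induction m', hmm using Nat.le_induction with
  | base => exact ⟨List.prefix_rfl, List.prefix_rfl⟩
  | succ m' hmm ih =>
    exact ⟨ih.1.trans (disc_succ_prefix nb S v hv m').1,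
      ih.2.trans (disc_succ_prefix nb S v hv m').2⟩

lemma disc_stall (m : ℕ) (h : (disc nb S v m).1.length ≤ m) :
    ∀ m', m ≤ m' → disc nb S v m' = disc nb S v m := by
  intro m' hmm
  induction m', hmm using Nat.le_induction with
  | base => rfl
  | succ m' hmm ih =>
    rw [disc, ih, dif_neg (by omega)]

lemma mem_row (hv : v ∈ S) {m : ℕ} (x : ℕ) {K : ℕ} (hK : m + 1 ≤ K) :
    ((m, x) ∈ (disc nb S v K).2 ↔ (m, x) ∈ (disc nb S v (m+1)).2) := by
  induction K, hK using Nat.le_induction with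
  | base => rfl
  | succ K hK ih =>
    by_cases h : K < (disc nb S v K).1.length
    · obtain ⟨L, M, h1, h2, -, -⟩ := disc_step nb S v hv K h
      rw [h1]
      simp only [List.mem_append]
      constructor
      · rintro (hx | hx)
        · exact ih.mp hx
        · exact absurd (h2 _ hx) (by simp; omega)
      · intro hx
        exact Or.inl (ih.mpr hx)
    · rw [disc, dif_neg h]
      exact ih

lemma dec_correct (hv : v ∈ S) (K : ℕ) :
    ∀ m, m ≤ K → dec nb ((disc nb S v K).2.toFinset) v m = (disc nb S v m).1 := by
  intro m
  induction m with
  | zero => intro _; rfl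
  | succ m ih =>
    intro hmK
    have hm := ih (by omega)
    rw [dec]
    by_cases h : m < (disc nb S v m).1.length
    · have h' : m < (dec nb ((disc nb S v K).2.toFinset) v m).length := by rw [hm]; exact h
      rw [dif_pos h']
      obtain ⟨L, M, h1, h2, h3, -⟩ := disc_step nb S v hv m h
      rw [h1, h3]
      simp only [hm]
      apply congrArg
      apply List.filterMap_congr
      intro j hj
      have hiff : ((m, j.1) ∈ (disc nb S v K).2.toFinset) ↔ ((m, j.1) ∈ M) := by
        rw [List.mem_toFinset, mem_row nb S v hv j.1 hmK]
        have hE : (disc nb S v (m+1)).2 = (disc nb S v m).2 ++ M := by rw [h1]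
        rw [hE, List.mem_append]
        constructor
        · rintro (hx | hx)
          · exact absurd ((disc_inv nb S v hv m).2.2.2.1 _ hx).1 (by simp)
          · exact hx
        · exact Or.inr
      rw [if_congr hiff rfl rfl]
    · have h' : ¬ m < (dec nb ((disc nb S v K).2.toFinset) v m).length := by rw [hm]; exact h
      rw [dif_neg h', hm, disc, dif_neg h]

lemma length_le (hv : v ∈ S) (m : ℕ) : (disc nb S v m).1.length ≤ S.card := by
  obtain ⟨hD, hDS, -, -⟩ := disc_inv nb S v hv m
  calc (disc nb S v m).1.length = (disc nb S v m).1.toFinset.card :=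
        (List.toFinset_card_of_nodup hD).symm
    _ ≤ S.card := Finset.card_le_card (fun w hw => hDS w (List.mem_toFinset.mp hw))

lemma closure (hv : v ∈ S) {k : ℕ} (hcard : S.card = k) {u w : V}
    (hu : u ∈ (disc nb S v k).1) (hw : w ∈ S) (hj : ∃ j, nb u j = some w) :
    w ∈ (disc nb S v k).1 := by
  obtain ⟨p, hp, hgot⟩ := List.mem_iff_getElem.mp hu
  have hpk : p < k := lt_of_lt_of_le hp (hcard ▸ length_le nb S v hv k)
  by_cases hpp : p < (disc nb S v p).1.length
  · have hpref := (disc_prefix nb S v hv (le_of_lt hpk)).1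
    have hgetp : (disc nb S v p).1[p]'hpp = u := by
      rw [← hgot, hpref.getElem hpp]
    obtain ⟨L, M, h1, -, -, h4⟩ := disc_step nb S v hv p hpp
    obtain ⟨j, hjw⟩ := hj
    have hwin : w ∈ (disc nb S v p).1 ++ L := h4 j w (by rw [hgetp]; exact hjw) hw
    have : w ∈ (disc nb S v (p+1)).1 := by rw [h1]; exact hwin
    exact (disc_prefix nb S v hv (by omega : p + 1 ≤ k)).1.subset this
  · push_neg at hpp
    have := disc_stall nb S v p hpp k (le_of_lt hpk)
    rw [this] at hp
    omega

lemma disc_toFinset (hv : v ∈ S) {k : ℕ} (hcard : S.card = k) {G : SimpleGraph V}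
    (hnb : ∀ u w, G.Adj u w → ∃ j, nb u j = some w)
    (hconn : (G.induce (S : Set V)).Connected) :
    (disc nb S v k).1.toFinset = S := by
  have hSsub : ∀ w ∈ S, w ∈ (disc nb S v k).1 := by
    intro w hw
    have hvD : v ∈ (disc nb S v k).1 := by
      have := (disc_prefix nb S v hv (Nat.zero_le k)).1
      exact this.subset (by simp [disc])
    have key : ∀ (a b : (S : Set V)) (p : (G.induce (S : Set V)).Walk a b),
        (a : V) ∈ (disc nb S v k).1 → (b : V) ∈ (disc nb S v k).1 := by
      intro a b p
      induction p with
      | nil => exact id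
      | cons hadj q ihq =>
        intro ha
        rename_i c d _
        have hGadj : G.Adj (c : V) (d : V) := hadj
        exact ihq (closure nb S v hv hcard ha d.2 (hnb _ _ hGadj))
    obtain ⟨p⟩ := hconn.preconnected ⟨v, hv⟩ ⟨w, hw⟩
    exact key _ _ p hvD
  ext w
  simp only [List.mem_toFinset]
  exact ⟨fun hw => (disc_inv nb S v hv k).2.1 w hw, hSsub w⟩

end ConnCount

lemma keyQ : ∀ r : ℕ, ((r : ℝ) + 1) ^ (r + 1) ≤ Real.exp 1 ^ r * (Nat.factorial (r + 1) : ℝ) := by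
  intro r
  induction r with
  | zero => norm_num
  | succ r ih =>
    set x : ℝ := (r : ℝ) + 1 with hx
    have hx0 : 0 < x := by positivity
    have claim1 : (1 + 1 / x) ^ (r + 1) ≤ Real.exp 1 := by
      have h1 : 1 + 1 / x ≤ Real.exp (1 / x) := by
        have := Real.add_one_le_exp (1 / x); linarith
      have h2 : (1 + 1 / x) ^ (r + 1) ≤ Real.exp (1 / x) ^ (r + 1) :=
        pow_le_pow_left₀ (by positivity) h1 _
      have h3 : Real.exp (1 / x) ^ (r + 1) = Real.exp 1 := by
        rw [← Real.exp_nat_mul]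
        congr 1
        push_cast [hx]
        field_simp
      rwa [h3] at h2
    have claim2 : (x + 1) ^ (r + 1) ≤ Real.exp 1 * x ^ (r + 1) := by
      have hxe : x + 1 = x * (1 + 1 / x) := by field_simp
      calc (x + 1) ^ (r + 1) = x ^ (r + 1) * (1 + 1 / x) ^ (r + 1) := by
            rw [hxe, mul_pow]
        _ ≤ x ^ (r + 1) * Real.exp 1 :=
            mul_le_mul_of_nonneg_left claim1 (by positivity)
        _ = Real.exp 1 * x ^ (r + 1) := mul_comm _ _
    have step : (x + 1) ^ (r + 2) ≤ Real.exp 1 ^ (r + 1) * ((Nat.factorial (r + 1) : ℝ) * (x + 1)) := by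
      calc (x + 1) ^ (r + 2) = (x + 1) ^ (r + 1) * (x + 1) := by ring
        _ ≤ (Real.exp 1 * x ^ (r + 1)) * (x + 1) :=
            mul_le_mul_of_nonneg_right claim2 (by positivity)
        _ ≤ (Real.exp 1 * (Real.exp 1 ^ r * (Nat.factorial (r + 1) : ℝ))) * (x + 1) := by
            apply mul_le_mul_of_nonneg_right _ (by positivity)
            exact mul_le_mul_of_nonneg_left ih (le_of_lt (Real.exp_pos 1))
        _ = Real.exp 1 ^ (r + 1) * ((Nat.factorial (r + 1) : ℝ) * (x + 1)) := by ring
    have hfac : (Nat.factorial (r + 2) : ℝ) = (Nat.factorial (r + 1) : ℝ) * (x + 1) := by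
      rw [Nat.factorial_succ]
      push_cast [hx]
      ring
    calc ((↑(r + 1) : ℝ) + 1) ^ (r + 1 + 1) = (x + 1) ^ (r + 2) := by push_cast [hx]; ring_nf
      _ ≤ Real.exp 1 ^ (r + 1) * ((Nat.factorial (r + 1) : ℝ) * (x + 1)) := step
      _ = Real.exp 1 ^ (r + 1) * (Nat.factorial (r + 2) : ℝ) := by rw [hfac]

lemma keyP (r : ℕ) : ((r : ℝ) + 1) ^ r ≤ Real.exp 1 ^ r * (Nat.factorial r : ℝ) := by
  have hq := keyQ r
  have hx0 : (0 : ℝ) < (r : ℝ) + 1 := by positivity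
  have hfac : (Nat.factorial (r + 1) : ℝ) = ((r : ℝ) + 1) * (Nat.factorial r : ℝ) := by
    rw [Nat.factorial_succ]; push_cast; ring
  rw [pow_succ, hfac] at hq
  have := le_of_mul_le_mul_right (by linarith [hq] : ((r:ℝ)+1)^r * ((r:ℝ)+1) ≤ (Real.exp 1 ^ r * (Nat.factorial r : ℝ)) * ((r:ℝ)+1)) hx0
  exact this

lemma choose_bound (Δ r : ℕ) : (((r + 1) * Δ).choose r : ℝ) ≤ (Real.exp 1 * Δ) ^ r := by
  have h1 : (((r + 1) * Δ).choose r : ℝ) ≤ ((((r + 1) * Δ : ℕ)) ^ r : ℝ) / (Nat.factorial r : ℝ) := by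
    exact_mod_cast Nat.choose_le_pow_div (α := ℝ) r ((r + 1) * Δ)
  have hfac0 : (0 : ℝ) < (Nat.factorial r : ℝ) := by positivity
  refine h1.trans ?_
  rw [div_le_iff₀ hfac0]
  have expand : ((((r + 1) * Δ : ℕ)) ^ r : ℝ) = ((r : ℝ) + 1) ^ r * (Δ : ℝ) ^ r := by
    push_cast; rw [mul_pow]
  rw [expand]
  have expand2 : (Real.exp 1 * (Δ : ℝ)) ^ r * (Nat.factorial r : ℝ)
      = (Real.exp 1 ^ r * (Nat.factorial r : ℝ)) * (Δ : ℝ) ^ r := by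
    rw [mul_pow]; ring
  rw [expand2]
  exact mul_le_mul_of_nonneg_right (keyP r) (by positivity)

/-- In an n-vertex graph of maximum degree at most Δ, the number of vertex subsets of size k
inducing a connected subgraph is at most n·(eΔ)^{k-1}. -/
theorem stmt2 {V : Type} [Fintype V] (G : SimpleGraph V) (n Δ : ℕ)
    (hn : Fintype.card V = n)
    (hΔ : ∀ v : V, (G.neighborSet v).ncard ≤ Δ) (k : ℕ) (hk : 1 ≤ k) :
    (Set.ncard {S : Finset V | S.card = k ∧ (G.induce (S : Set V)).Connected} : ℝ)
      ≤ n * (Real.exp 1 * Δ) ^ (k - 1) := by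
  classical
  obtain ⟨r, rfl⟩ : ∃ r, k = r + 1 := ⟨k - 1, by omega⟩
  simp only [Nat.add_sub_cancel]
  set C : Set (Finset V) := {S : Finset V | S.card = r + 1 ∧ (G.induce (S : Set V)).Connected}
    with hC
  rcases isEmpty_or_nonempty V with hemp | hne
  · have hCe : C = ∅ := by
      ext S
      simp only [hC, Set.mem_setOf_eq, Set.mem_empty_iff_false, iff_false, not_and]
      intro hcard
      exfalso
      obtain ⟨x, -⟩ := Finset.card_pos.mp (by omega : 0 < S.card)
      exact hemp.false x
    rw [hCe]
    simp only [Set.ncard_empty, Nat.cast_zero]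
    positivity
  · haveI hInh : Inhabited V := Classical.inhabited_of_nonempty hne
    set lst : V → List V := fun u => (Set.toFinite (G.neighborSet u)).toFinset.toList with hlst
    have hlen : ∀ u, (lst u).length ≤ Δ := by
      intro u
      have h1 : (lst u).length = (G.neighborSet u).ncard := by
        rw [hlst]
        rw [Finset.length_toList, ← Set.ncard_eq_toFinset_card]
      rw [h1]; exact hΔ u
    set nb : V → Fin Δ → Option V := fun u j => (lst u)[j.1]? with hnbdef
    have hnbAdj : ∀ u w : V, G.Adj u w → ∃ j : Fin Δ, nb u j = some w := by
      intro u w ha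
      have hmem : w ∈ lst u := by
        rw [hlst]
        simp only [Finset.mem_toList, Set.Finite.mem_toFinset, SimpleGraph.mem_neighborSet]
        exact ha
      obtain ⟨i, hi, hw⟩ := List.mem_iff_getElem.mp hmem
      refine ⟨⟨i, lt_of_lt_of_le hi (hlen u)⟩, ?_⟩
      show (lst u)[i]? = some w
      rw [List.getElem?_eq_getElem hi, hw]
    have hrootmem : ∀ S : Finset V, S ∈ C → S.toList.headI ∈ S := by
      intro S hS
      have hne' : S.toList ≠ [] := by
        intro h0
        have hSe : S = ∅ := by rwa [← Finset.toList_eq_nil]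
        rw [hC] at hS
        rw [hSe] at hS
        simp at hS
      have hmem : S.toList.headI ∈ S.toList := by
        cases hl : S.toList with
        | nil => exact absurd hl hne'
        | cons a t => simp [hl, List.headI]
      rwa [Finset.mem_toList] at hmem
    set f : Finset V → V × Finset (ℕ × ℕ) :=
      fun S => (S.toList.headI, (ConnCount.disc nb S S.toList.headI (r + 1)).2.toFinset) with hf
    set T : Finset (V × Finset (ℕ × ℕ)) :=
      Finset.univ ×ˢ Finset.powersetCard r (Finset.range (r + 1) ×ˢ Finset.range Δ) with hT
    have hfacts : ∀ S ∈ C, (ConnCount.disc nb S S.toList.headI (r + 1)).1.toFinset = S := by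
      intro S hS
      obtain ⟨hcard, hconn⟩ := hS
      exact ConnCount.disc_toFinset nb S _ (hrootmem S ⟨hcard, hconn⟩) hcard hnbAdj hconn
    have hmaps : ∀ S ∈ C, f S ∈ (T : Set (V × Finset (ℕ × ℕ))) := by
      intro S hS
      have hv := hrootmem S hS
      have hDS := hfacts S hS
      obtain ⟨hcard, hconn⟩ := hS
      obtain ⟨hD, hDmem, hlenE, hEp, hEnd⟩ :=
        ConnCount.disc_inv nb S S.toList.headI hv (r + 1)
      have hDlen : (ConnCount.disc nb S S.toList.headI (r + 1)).1.length = r + 1 := by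
        rw [← List.toFinset_card_of_nodup hD, hDS, hcard]
      have hElen : (ConnCount.disc nb S S.toList.headI (r + 1)).2.length = r := by omega
      simp only [hT, Finset.coe_mem, Finset.mem_coe, Finset.mem_product, Finset.mem_univ,
        true_and, Finset.mem_powersetCard]
      constructor
      · intro p hp
        rw [List.mem_toFinset] at hp
        obtain ⟨h1, h2⟩ := hEp p hp
        rcases p with ⟨pm, pj⟩
        simp only [Finset.mem_product, Finset.mem_range]
        exact ⟨h1, h2⟩
      · rw [List.toFinset_card_of_nodup hEnd, hElen]
    have hinj : Set.InjOn f C := by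
      intro S1 h1 S2 h2 heq
      have hv1 := hrootmem S1 h1
      have hv2 := hrootmem S2 h2
      have e1 : (ConnCount.dec nb ((ConnCount.disc nb S1 S1.toList.headI (r + 1)).2.toFinset)
          S1.toList.headI (r + 1)).toFinset = S1 := by
        rw [ConnCount.dec_correct nb S1 S1.toList.headI hv1 (r + 1) (r + 1) le_rfl]
        exact hfacts S1 h1
      have e2 : (ConnCount.dec nb ((ConnCount.disc nb S2 S2.toList.headI (r + 1)).2.toFinset)
          S2.toList.headI (r + 1)).toFinset = S2 := by
        rw [ConnCount.dec_correct nb S2 S2.toList.headI hv2 (r + 1) (r + 1) le_rfl]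
        exact hfacts S2 h2
      have hfst : S1.toList.headI = S2.toList.headI := congrArg Prod.fst heq
      have hsnd : (ConnCount.disc nb S1 S1.toList.headI (r + 1)).2.toFinset
          = (ConnCount.disc nb S2 S2.toList.headI (r + 1)).2.toFinset := congrArg Prod.snd heq
      rw [← e1, ← e2, hsnd, hfst]
    have hfin : ((T : Set (V × Finset (ℕ × ℕ)))).Finite := T.finite_toSet
    have hcount := Set.ncard_le_ncard_of_injOn f hmaps hinj hfin
    rw [Set.ncard_coe_finset] at hcount
    have hTcard : T.card = n * ((r + 1) * Δ).choose r := by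
      rw [hT, Finset.card_product, Finset.card_univ, hn, Finset.card_powersetCard,
        Finset.card_product, Finset.card_range, Finset.card_range]
    calc (C.ncard : ℝ) ≤ (T.card : ℝ) := by exact_mod_cast hcount
      _ = (n : ℝ) * ((((r + 1) * Δ).choose r : ℕ) : ℝ) := by rw [hTcard]; push_cast; ring
      _ ≤ (n : ℝ) * (Real.exp 1 * Δ) ^ r :=
          mul_le_mul_of_nonneg_left (choose_bound Δ r) (by positivity)
end

section
/- (Combinatorial Nullstellensatz, nonvanishing form) Let F be a field and f ∈ F[x₁,…,x_n] a polynomial of total degree d. Suppose the coefficient of the monomial x₁^{μ₁}⋯x_n^{μ_n} in f is nonzero, where μ₁ + ⋯ + μ_n = d. If S₁, …, S_n ⊆ F are finite sets with |S_i| ≥ μ_i + 1 for each i, then there exists a point s ∈ S₁ × ⋯ × S_n with f(s) ≠ 0. -/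
open Polynomial Lagrange Finset in
lemma lemL {F : Type} [Field F] [DecidableEq F] (T : Finset F) (ν : ℕ) (hν : ν < T.card) :
    ∑ t ∈ T, nodalWeight T id t * t ^ ν = if ν = T.card - 1 then 1 else 0 := by
  have hinj : Set.InjOn id (T : Set F) := Set.injOn_id _
  have hdeg : (X ^ ν : F[X]).degree < T.card := by
    rw [degree_X_pow]; exact_mod_cast hν
  have hrep := Lagrange.eq_interpolate hinj hdeg
  have hbasis : ∀ t ∈ T, (Lagrange.basis T id t).coeff (T.card - 1) = nodalWeight T id t := by
    intro t ht
    rw [basis_eq_prod_sub_inv_mul_nodal_div ht, ← nodal_erase_eq_nodal_div ht, coeff_C_mul]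
    have h1 : (T.erase t).card = T.card - 1 := Finset.card_erase_of_mem ht
    have h2 := (nodal_monic (s := T.erase t) (v := id)).coeff_natDegree
    rw [natDegree_nodal, h1] at h2
    rw [h2, mul_one]
  have := congrArg (fun p => p.coeff (T.card - 1)) hrep
  simp only [interpolate_apply, finset_sum_coeff, coeff_C_mul, coeff_X_pow] at this
  simp only [eval_X, eval_pow, id] at this
  rw [eq_comm, Finset.sum_congr rfl fun t ht => by rw [hbasis t ht]] at this
  simpa [eq_comm, mul_comm] using this

open Polynomial Lagrange Finset in
lemma lemM {F : Type} [Field F] [DecidableEq F] {n : ℕ} (f : MvPolynomial (Fin n) F)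
    (μ : Fin n → ℕ) (hdeg : f.totalDegree ≤ ∑ i, μ i)
    (S : Fin n → Finset F) (hS : ∀ i, (S i).card = μ i + 1) :
    f.coeff (Finsupp.equivFunOnFinite.symm μ)
      = ∑ s ∈ Fintype.piFinset S, (∏ i, nodalWeight (S i) id (s i)) * MvPolynomial.eval s f := by
  have key : ∀ ν ∈ f.support,
      (∏ i, ∑ t ∈ S i, nodalWeight (S i) id t * t ^ ν i)
        = if ν = Finsupp.equivFunOnFinite.symm μ then 1 else 0 := by
    intro ν hν
    have hμν : ν = Finsupp.equivFunOnFinite.symm μ ↔ ∀ i, ν i = μ i := by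
      constructor
      · intro h i; rw [h]; simp
      · intro h; ext i; simp [h i]
    by_cases hle : ∀ i, ν i ≤ μ i
    · have : ∀ i ∈ Finset.univ, (∑ t ∈ S i, nodalWeight (S i) id t * t ^ ν i)
          = if ν i = μ i then 1 else 0 := by
        intro i _
        rw [lemL (S i) (ν i) (by rw [hS i]; exact Nat.lt_succ_of_le (hle i))]
        simp [hS i]
      rw [Finset.prod_congr rfl this, Finset.prod_boole]
      simp [hμν]
    · push_neg at hle
      obtain ⟨i, hi⟩ := hle
      have hsum : ∑ j, ν j ≤ ∑ j, μ j := by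
        refine le_trans ?_ hdeg
        have := MvPolynomial.le_totalDegree hν
        rwa [Finsupp.sum_fintype _ _ (fun _ => rfl)] at this
      have hj : ∃ j, ν j < μ j := by
        by_contra h
        push_neg at h
        have : ∑ j, μ j < ∑ j, ν j :=
          Finset.sum_lt_sum (fun j _ => h j) ⟨i, Finset.mem_univ i, hi⟩
        omega
      obtain ⟨j, hj⟩ := hj
      have hzero : (∑ t ∈ S j, nodalWeight (S j) id t * t ^ ν j) = 0 := by
        rw [lemL (S j) (ν j) (by rw [hS j]; omega)]
        simp only [hS j]
        rw [if_neg (by omega)]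
      rw [Finset.prod_eq_zero (Finset.mem_univ j) hzero]
      rw [if_neg (by rw [hμν]; push_neg; exact ⟨i, by omega⟩)]
  calc f.coeff (Finsupp.equivFunOnFinite.symm μ)
      = ∑ ν ∈ f.support, f.coeff ν * (if ν = Finsupp.equivFunOnFinite.symm μ then 1 else 0) := by
        simp only [mul_ite, mul_one, mul_zero]
        rw [Finset.sum_ite_eq' f.support _ f.coeff]
        split
        · rfl
        · exact MvPolynomial.notMem_support_iff.mp (by assumption)
    _ = ∑ ν ∈ f.support, f.coeff ν * ∏ i, ∑ t ∈ S i, nodalWeight (S i) id t * t ^ ν i := by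
        exact Finset.sum_congr rfl fun ν hν => by rw [key ν hν]
    _ = ∑ ν ∈ f.support, f.coeff ν *
          ∑ s ∈ Fintype.piFinset S, ∏ i, nodalWeight (S i) id (s i) * (s i) ^ ν i := by
        exact Finset.sum_congr rfl fun ν _ => by rw [Finset.prod_univ_sum]
    _ = ∑ s ∈ Fintype.piFinset S, (∏ i, nodalWeight (S i) id (s i)) * MvPolynomial.eval s f := by
        simp only [Finset.mul_sum]
        rw [Finset.sum_comm]
        refine Finset.sum_congr rfl fun s _ => ?_
        rw [MvPolynomial.eval_eq', Finset.mul_sum]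
        refine Finset.sum_congr rfl fun ν _ => ?_
        rw [Finset.prod_mul_distrib]
        ring

/-- Combinatorial Nullstellensatz (nonvanishing form). -/
theorem stmt12 {F : Type} [Field F] (n : ℕ) (f : MvPolynomial (Fin n) F) (d : ℕ)
    (hd : f.totalDegree = d) (μ : Fin n → ℕ) (hμ : ∑ i, μ i = d)
    (hcoeff : f.coeff (Finsupp.equivFunOnFinite.symm μ) ≠ 0)
    (S : Fin n → Finset F) (hS : ∀ i, μ i + 1 ≤ (S i).card) :
    ∃ s : Fin n → F, (∀ i, s i ∈ S i) ∧ MvPolynomial.eval s f ≠ 0 := by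
  classical
  choose T hT hTcard using fun i => Finset.exists_subset_card_eq (hS i)
  by_contra h
  push_neg at h
  have key := lemM f μ (le_of_eq (by rw [hd, hμ])) T hTcard
  rw [Finset.sum_eq_zero] at key
  · exact hcoeff key
  · intro s hs
    rw [h s fun i => hT i (Fintype.mem_piFinset.mp hs i), mul_zero]
end

section
/- Let v₁, …, v_{ℓ−1} ∈ F^{ℓ−1} be linearly independent vectors over an infinite field F (or over ℚ), and let φ : F^r → F^ℓ be a map of the form φ(x) = (x^{δ₁}, …, x^{δ_ℓ}) given by distinct monomials x^{δ_j} with multi-indices δ₁, …, δ_ℓ all of the same total weighted degree m (with respect to positive integer weights h). Given ℓ−1 points ν₁,…,ν_{ℓ−1} ∈ ℕ^r such that the truncations (φ(ν_i))|_{ℓ−1} extend the v_i to an invertible (ℓ−1)×(ℓ−1) matrix, there exists ν_ℓ ∈ ℕ^r, with each coordinate ν_{ℓ,i} ∈ {1, …, δ_{ℓ,i}h_i + 1}, such that the ℓ×ℓ matrix with columns φ(ν₁),…,φ(ν_ℓ) is invertible. -/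
open Finset MvPolynomial


private lemma cn_div {F : Type*} [Field F] {σ : Type*} [Fintype σ] [DecidableEq σ]
    (f : MvPolynomial σ F) (i : σ) (a : F) :
    ∃ q r : MvPolynomial σ F,
      f = (X i - C a) * q + r ∧
      q.totalDegree ≤ f.totalDegree - 1 ∧
      (∀ d : σ →₀ ℕ, d i ≠ 0 → r.coeff d = 0) ∧
      (∀ s : σ → F, eval s r = eval (Function.update s i a) f) := by
  classical
  refine ⟨∑ e ∈ f.support, monomial (e.erase i) (f.coeff e) *
      ∑ j ∈ Finset.range (e i), X i ^ j * C a ^ (e i - 1 - j),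
    ∑ e ∈ f.support, monomial (e.erase i) (f.coeff e * a ^ e i), ?_, ?_, ?_, ?_⟩
  · have key : ∀ e ∈ f.support, (X i - C a) * (monomial (e.erase i) (f.coeff e) *
        ∑ j ∈ Finset.range (e i), X i ^ j * C a ^ (e i - 1 - j))
        + monomial (e.erase i) (f.coeff e * a ^ e i) = monomial e (f.coeff e) := by
      intro e _
      have hg : (X i - C a) * (∑ j ∈ Finset.range (e i), X i ^ j * C a ^ (e i - 1 - j))
          = X i ^ e i - C a ^ e i := by
        rw [mul_comm]; exact geom_sum₂_mul (X i : MvPolynomial σ F) (C a) (e i)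
      have h1 : monomial (e.erase i) (f.coeff e) * X i ^ e i = monomial e (f.coeff e) := by
        rw [X_pow_eq_monomial, monomial_mul, mul_one]
        congr 1
        rw [add_comm, Finsupp.single_add_erase]
      have h2 : monomial (e.erase i) (f.coeff e) * C a ^ e i
          = monomial (e.erase i) (f.coeff e * a ^ e i) := by
        rw [← C_pow, C_apply, monomial_mul, add_zero]
      calc (X i - C a) * (monomial (e.erase i) (f.coeff e) *
            ∑ j ∈ Finset.range (e i), X i ^ j * C a ^ (e i - 1 - j))
            + monomial (e.erase i) (f.coeff e * a ^ e i)
          = monomial (e.erase i) (f.coeff e) * ((X i - C a) *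
            ∑ j ∈ Finset.range (e i), X i ^ j * C a ^ (e i - 1 - j))
            + monomial (e.erase i) (f.coeff e * a ^ e i) := by ring
        _ = monomial e (f.coeff e) := by
            rw [hg, mul_sub, h1, h2]; ring
    conv_lhs => rw [f.as_sum]
    rw [Finset.mul_sum, ← Finset.sum_add_distrib]
    exact (Finset.sum_congr rfl key).symm
  · refine (totalDegree_finset_sum _ _).trans (Finset.sup_le fun e he => ?_)
    by_cases he0 : e i = 0
    · simp [he0]
    refine (totalDegree_mul _ _).trans ?_
    have h1 : (monomial (e.erase i) (f.coeff e)).totalDegree = (e.erase i).sum fun _ n => n :=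
      totalDegree_monomial _ (mem_support_iff.mp he)
    have h2 : (∑ j ∈ Finset.range (e i), (X i : MvPolynomial σ F) ^ j
        * C a ^ (e i - 1 - j)).totalDegree ≤ e i - 1 := by
      refine (totalDegree_finset_sum _ _).trans (Finset.sup_le fun j hj => ?_)
      refine (totalDegree_mul _ _).trans ?_
      have h3 : ((X i : MvPolynomial σ F) ^ j).totalDegree ≤ j := by
        simpa using totalDegree_pow (X i : MvPolynomial σ F) j
      have h4 : ((C a : MvPolynomial σ F) ^ (e i - 1 - j)).totalDegree ≤ 0 := by
        simpa using totalDegree_pow (C a : MvPolynomial σ F) (e i - 1 - j)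
      have := Finset.mem_range.mp hj
      omega
    have h5 : ((e.erase i).sum fun _ n => n) + e i = e.sum fun _ n => n := by
      conv_rhs => rw [← Finsupp.single_add_erase i e]
      rw [Finsupp.sum_add_index' (fun _ => rfl) (fun _ _ _ => rfl),
        Finsupp.sum_single_index rfl, add_comm]
    have h6 : (e.sum fun _ n => n) ≤ f.totalDegree := le_totalDegree he
    omega
  · intro d hd
    rw [coeff_sum]
    refine Finset.sum_eq_zero fun e he => ?_
    rw [coeff_monomial, if_neg]
    intro hcontra
    apply hd
    rw [← hcontra, Finsupp.erase_same]
  · intro s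
    rw [map_sum, eval_eq']
    refine Finset.sum_congr rfl fun e he => ?_
    rw [eval_monomial, Finsupp.prod_fintype _ _ (fun t => pow_zero _)]
    have hL : ∏ t, s t ^ (e.erase i) t = ∏ t ∈ Finset.univ.erase i, s t ^ e t := by
      rw [← Finset.mul_prod_erase Finset.univ _ (Finset.mem_univ i), Finsupp.erase_same,
        pow_zero, one_mul]
      exact Finset.prod_congr rfl fun t ht =>
        by rw [Finsupp.erase_ne (Finset.mem_erase.mp ht).1]
    have hR : ∏ t, Function.update s i a t ^ e t
        = a ^ e i * ∏ t ∈ Finset.univ.erase i, s t ^ e t := by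
      rw [← Finset.mul_prod_erase Finset.univ _ (Finset.mem_univ i), Function.update_self]
      exact congrArg _ (Finset.prod_congr rfl fun t ht =>
        by rw [Function.update_of_ne (Finset.mem_erase.mp ht).1])
    rw [hL, hR]
    ring


private lemma cn_vanish {F : Type*} [Field F] [DecidableEq F] {σ : Type*} [Fintype σ] [DecidableEq σ] :
    ∀ (n : ℕ) (f : MvPolynomial σ F) (d : σ → ℕ) (S : σ → Finset F),
      (∑ t, d t) = n → f.totalDegree ≤ n → (∀ t, d t < (S t).card) →
      (∀ s : σ → F, (∀ t, s t ∈ S t) → eval s f = 0) →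
      f.coeff (Finsupp.equivFunOnFinite.symm d) = 0 := by
  intro n
  induction n with
  | zero =>
    intro f d S hsum hdeg hcard hvan
    have hd0 : ∀ t, d t = 0 := by
      intro t
      have := Finset.sum_eq_zero_iff.mp hsum t (Finset.mem_univ t)
      exact this
    have hD : (Finsupp.equivFunOnFinite.symm d) = 0 := by
      ext t; simp [hd0 t]
    have hfC : f = C (f.coeff 0) := by
      ext e
      rcases eq_or_ne e 0 with rfl | he
      · simp
      · rw [coeff_C, if_neg (Ne.symm he)]
        refine coeff_eq_zero_of_totalDegree_lt ?_
        have : e.support.Nonempty := Finsupp.support_nonempty_iff.mpr he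
        obtain ⟨t, ht⟩ := this
        have h1 : 1 ≤ e t := Nat.one_le_iff_ne_zero.mpr (Finsupp.mem_support_iff.mp ht)
        have : 1 ≤ ∑ i ∈ e.support, e i :=
          le_trans h1 (Finset.single_le_sum (fun _ _ => Nat.zero_le _) ht)
        omega
    -- pick a point in the box
    have hne : ∀ t, (S t).Nonempty := fun t =>
      Finset.card_pos.mp (lt_of_le_of_lt (Nat.zero_le _) (hcard t))
    set s : σ → F := fun t => (hne t).choose with hs
    have hmem : ∀ t, s t ∈ S t := fun t => (hne t).choose_spec
    have := hvan s hmem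
    rw [hfC] at this
    simp at this
    rw [hD, hfC]
    simpa using this
  | succ n IH =>
    intro f d S hsum hdeg hcard hvan
    obtain ⟨i₀, _, hi₀⟩ : ∃ i₀ ∈ Finset.univ, d i₀ ≠ 0 := by
      apply Finset.exists_ne_zero_of_sum_ne_zero
      rw [hsum]; exact Nat.succ_ne_zero n
    obtain ⟨a, ha⟩ : (S i₀).Nonempty :=
      Finset.card_pos.mp (lt_of_le_of_lt (Nat.zero_le _) (hcard i₀))
    obtain ⟨q, r, hdiv, hq, hr1, hr2⟩ := cn_div f i₀ a
    set d' : σ → ℕ := Function.update d i₀ (d i₀ - 1) with hd'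
    set S' : σ → Finset F := Function.update S i₀ ((S i₀).erase a) with hS'
    have hsum' : (∑ t, d' t) = n := by
      rw [hd', Finset.sum_update_of_mem (Finset.mem_univ i₀),
        Finset.sdiff_singleton_eq_erase]
      rw [← Finset.add_sum_erase _ d (Finset.mem_univ i₀)] at hsum
      omega
    have hqdeg : q.totalDegree ≤ n := by
      have := hq; omega
    have hcard' : ∀ t, d' t < (S' t).card := by
      intro t
      rcases eq_or_ne t i₀ with rfl | ht
      · rw [hd', hS', Function.update_self, Function.update_self,
          Finset.card_erase_of_mem ha]
        have := hcard t; omega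
      · rw [hd', hS', Function.update_of_ne ht, Function.update_of_ne ht]
        exact hcard t
    have hvan' : ∀ s : σ → F, (∀ t, s t ∈ S' t) → eval s q = 0 := by
      intro s hs
      have hsi : s i₀ ∈ (S i₀).erase a := by
        have := hs i₀; rwa [hS', Function.update_self] at this
      have hsne : s i₀ ≠ a := (Finset.mem_erase.mp hsi).1
      have hsbox : ∀ t, s t ∈ S t := by
        intro t
        rcases eq_or_ne t i₀ with rfl | ht
        · exact Finset.mem_of_mem_erase hsi
        · have := hs t; rwa [hS', Function.update_of_ne ht] at this
      have hupd : ∀ t, Function.update s i₀ a t ∈ S t := by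
        intro t
        rcases eq_or_ne t i₀ with rfl | ht
        · rw [Function.update_self]; exact ha
        · rw [Function.update_of_ne ht]; exact hsbox t
      have hevr : eval s r = 0 := by rw [hr2 s]; exact hvan _ hupd
      have hevf : eval s f = 0 := hvan s hsbox
      have : eval s ((X i₀ - C a) * q) = 0 := by
        have h := congrArg (eval s) hdiv
        rw [map_add, hevf, hevr, add_zero] at h
        exact h.symm
      rw [map_mul, map_sub, eval_X, eval_C] at this
      rcases mul_eq_zero.mp this with h | h
      · exact absurd (sub_eq_zero.mp h) hsne
      · exact h
    have hIH := IH q d' S' hsum' hqdeg hcard' hvan'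
    -- now compute coeff d f
    have hDsplit : (Finsupp.equivFunOnFinite.symm d)
        = Finsupp.single i₀ 1 + Finsupp.equivFunOnFinite.symm d' := by
      ext t
      rcases eq_or_ne t i₀ with rfl | ht
      · simp [hd', Finsupp.single_apply]
        omega
      · simp [hd', Finsupp.single_apply, ht, Ne.symm ht, Function.update_of_ne ht]
    have hcoeffq : q.coeff (Finsupp.equivFunOnFinite.symm d) = 0 := by
      apply coeff_eq_zero_of_totalDegree_lt
      have : ∑ i ∈ (Finsupp.equivFunOnFinite.symm d).support,
          (Finsupp.equivFunOnFinite.symm d) i = ∑ t, d t := by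
        apply Finset.sum_subset (Finset.subset_univ _)
        · intro t _ ht
          simpa using Finsupp.notMem_support_iff.mp ht
      rw [this, hsum]
      omega
    have hcoeffr : r.coeff (Finsupp.equivFunOnFinite.symm d) = 0 := by
      apply hr1
      simpa using hi₀
    have := congrArg (fun p => MvPolynomial.coeff (Finsupp.equivFunOnFinite.symm d) p) hdiv
    simp only [coeff_add] at this
    rw [this, hcoeffr, sub_mul, coeff_sub, hDsplit, coeff_X_mul, ← hDsplit, coeff_C_mul,
      hcoeffq, hIH]
    ring

private lemma cn_exists {F : Type*} [Field F] [DecidableEq F] {σ : Type*} [Fintype σ] [DecidableEq σ]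
    (f : MvPolynomial σ F) (d : σ → ℕ) (S : σ → Finset F)
    (hdeg : f.totalDegree ≤ ∑ t, d t) (hcard : ∀ t, d t < (S t).card)
    (hc : f.coeff (Finsupp.equivFunOnFinite.symm d) ≠ 0) :
    ∃ s : σ → F, (∀ t, s t ∈ S t) ∧ eval s f ≠ 0 := by
  by_contra hcon
  push_neg at hcon
  exact hc (cn_vanish (∑ t, d t) f d S rfl hdeg hcard hcon)



/-- One step of the matrix-extension argument: given ℓ−1 = L points ν₁,…,ν_L making the
truncated L×L monomial matrix invertible, the Combinatorial Nullstellensatz yields a point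
ν_{L+1} with coordinates in {1,…,δ_{ℓ,i}h_i+1} making the (L+1)×(L+1) matrix invertible. -/
theorem stmt16 (L r m : ℕ) (h : Fin r → ℕ) (hh : ∀ t, 1 ≤ h t)
    (δ : Fin (L + 1) → Fin r → ℕ) (hδ : Function.Injective δ)
    (hdeg : ∀ j, ∑ t, δ j t * h t = m)
    (ν : Fin L → Fin r → ℕ)
    (hM : (Matrix.of fun i j : Fin L =>
        ∏ t, (ν j t : ℚ) ^ (δ i.castSucc t * h t)).det ≠ 0) :
    ∃ νL : Fin r → ℕ,
      (∀ t, 1 ≤ νL t ∧ νL t ≤ δ (Fin.last L) t * h t + 1) ∧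
      (Matrix.of fun i j : Fin (L + 1) =>
          ∏ t, ((Fin.snoc ν νL : Fin (L + 1) → Fin r → ℕ) j t : ℚ) ^ (δ i t * h t)).det
        ≠ 0 := by
  classical
  set Dfun : Fin (L + 1) → (Fin r →₀ ℕ) :=
    fun i => Finsupp.equivFunOnFinite.symm (fun t => δ i t * h t) with hDfun
  set B : Matrix (Fin (L + 1)) (Fin (L + 1)) (MvPolynomial (Fin r) ℚ) :=
    Matrix.of fun i j => (Fin.snoc
      (fun j' : Fin L => (C (∏ t, (ν j' t : ℚ) ^ (δ i t * h t)) : MvPolynomial (Fin r) ℚ))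
      (∏ t, (X t : MvPolynomial (Fin r) ℚ) ^ (δ i t * h t))
      : Fin (L + 1) → MvPolynomial (Fin r) ℚ) j with hB
  set Mi : Fin (L + 1) → Matrix (Fin L) (Fin L) ℚ :=
    fun i => Matrix.of fun i' j' => ∏ t, (ν j' t : ℚ) ^ (δ (i.succAbove i') t * h t) with hMi
  have hDapp : ∀ i t, Dfun i t = δ i t * h t := fun i t => rfl
  have hmono : ∀ i : Fin (L + 1),
      (∏ t, (X t : MvPolynomial (Fin r) ℚ) ^ (δ i t * h t)) = monomial (Dfun i) 1 := by
    intro i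
    rw [← prod_X_pow_eq_monomial]
    refine (Finset.prod_subset (Finset.subset_univ _) ?_).symm
    intro t _ ht
    have h0 : δ i t * h t = 0 := by
      by_contra hne
      exact ht (Finsupp.mem_support_iff.mpr hne)
    rw [h0, pow_zero]
  have hsub : ∀ i : Fin (L + 1), B.submatrix i.succAbove (Fin.last L).succAbove
      = (Mi i).map C := by
    intro i; ext i' j'
    simp [hB, hMi, Fin.succAbove_last, Matrix.submatrix_apply, Fin.snoc_castSucc]
  have hP : B.det = ∑ i, monomial (Dfun i) ((-1 : ℚ) ^ ((i : ℕ) + L) * (Mi i).det) := by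
    rw [Matrix.det_succ_column B (Fin.last L)]
    refine Finset.sum_congr rfl fun i _ => ?_
    rw [hsub i]
    have hdet : ((Mi i).map ⇑(C : ℚ →+* MvPolynomial (Fin r) ℚ)).det
        = (C : ℚ →+* MvPolynomial (Fin r) ℚ) ((Mi i).det) := by
      rw [← RingHom.mapMatrix_apply, ← RingHom.map_det]
    have hBlast : B i (Fin.last L) = monomial (Dfun i) 1 := by
      rw [hB]
      simp only [Matrix.of_apply, Fin.snoc_last]
      exact hmono i
    rw [hBlast, hdet, Fin.val_last,
      show ((-1 : MvPolynomial (Fin r) ℚ)) ^ ((i : ℕ) + L)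
        = C ((-1 : ℚ) ^ ((i : ℕ) + L)) by rw [map_pow, map_neg, map_one],
      C_mul_monomial, mul_one, C_apply, monomial_mul, add_zero]
  have hDinj : ∀ i : Fin (L + 1), Dfun i = Dfun (Fin.last L) → i = Fin.last L := by
    intro i hi
    apply hδ
    funext t
    have ht := DFunLike.congr_fun hi t
    rw [hDapp, hDapp] at ht
    have := hh t
    exact Nat.eq_of_mul_eq_mul_right (by omega) ht
  have hcoeff : B.det.coeff (Dfun (Fin.last L)) = (Mi (Fin.last L)).det := by
    rw [hP, coeff_sum]
    rw [Finset.sum_eq_single (Fin.last L)]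
    · rw [coeff_monomial, if_pos rfl, Fin.val_last]
      have : (-1 : ℚ) ^ (L + L) = 1 := Even.neg_one_pow ⟨L, rfl⟩
      rw [this, one_mul]
    · intro i _ hne
      rw [coeff_monomial, if_neg (fun hD => hne (hDinj i hD))]
    · intro hmem
      exact absurd (Finset.mem_univ _) hmem
  have hMlast : Mi (Fin.last L)
      = Matrix.of fun i j : Fin L => ∏ t, (ν j t : ℚ) ^ (δ i.castSucc t * h t) := by
    ext i' j'
    simp [hMi, Fin.succAbove_last]
  have hPdeg : B.det.totalDegree ≤ m := by
    rw [hP]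
    refine (totalDegree_finset_sum _ _).trans (Finset.sup_le fun i _ => ?_)
    by_cases hc : ((-1 : ℚ) ^ ((i : ℕ) + L) * (Mi i).det) = 0
    · simp [hc]
    · rw [totalDegree_monomial _ hc, Finsupp.sum_fintype _ _ (fun _ => rfl)]
      exact le_of_eq ((Finset.sum_congr rfl fun t _ => hDapp i t).trans (hdeg i))
  set d : Fin r → ℕ := fun t => δ (Fin.last L) t * h t with hd
  set S : Fin r → Finset ℚ := fun t => (Finset.range (d t + 1)).image
    (fun k => ((k + 1 : ℕ) : ℚ)) with hS
  have hinj : Function.Injective (fun k : ℕ => ((k + 1 : ℕ) : ℚ)) := by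
    intro a b hab
    simpa using hab
  have hcard : ∀ t, d t < (S t).card := by
    intro t
    rw [hS]
    rw [Finset.card_image_of_injective _ hinj, Finset.card_range]
    omega
  obtain ⟨s, hmem, hev⟩ := cn_exists B.det d S
    (hPdeg.trans (le_of_eq (hdeg (Fin.last L)).symm)) hcard
    (by
      show B.det.coeff (Dfun (Fin.last L)) ≠ 0
      rw [hcoeff, hMlast]
      exact hM)
  have hks : ∀ t, ∃ k : ℕ, k < d t + 1 ∧ ((k + 1 : ℕ) : ℚ) = s t := by
    intro t
    obtain ⟨k, hk, hks⟩ := Finset.mem_image.mp (hmem t)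
    exact ⟨k, Finset.mem_range.mp hk, hks⟩
  choose k hk1 hk2 using hks
  refine ⟨fun t => k t + 1, fun t => ⟨by show 1 ≤ k t + 1; omega, by
    have := hk1 t
    show k t + 1 ≤ d t + 1
    omega⟩, ?_⟩
  have heval : MvPolynomial.eval s B.det = (Matrix.of fun i j : Fin (L + 1) =>
      ∏ t, ((Fin.snoc ν (fun t => k t + 1) : Fin (L + 1) → Fin r → ℕ) j t : ℚ)
        ^ (δ i t * h t)).det := by
    rw [RingHom.map_det]
    congr 1
    ext i j
    rw [RingHom.mapMatrix_apply, Matrix.map_apply]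
    induction j using Fin.lastCases with
    | last =>
      rw [hB]
      simp only [Matrix.of_apply, Fin.snoc_last]
      rw [map_prod]
      refine Finset.prod_congr rfl fun t _ => ?_
      rw [map_pow, eval_X, ← hk2 t]
    | cast j' =>
      rw [hB]
      simp only [Matrix.of_apply, Fin.snoc_castSucc]
      rw [eval_C]
  rw [← heval]
  exact hev
end

section
/- Let h ∈ ℕ^r with positive entries and m ∈ ℕ, and let γ₁, …, γ_k be an enumeration of all γ ∈ ℤ_{≥0}^r with γ·h = m. Then there exist vectors ν₁, …, ν_k ∈ ℕ^r (with positive integer entries) such that the k×k matrix M with entries M_{ij} = ν_i^{γ_j∘h} := Π_{t=1}^r ν_{i,t}^{γ_{j,t}h_t} is invertible over ℚ. -/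
/-- Base-B digit uniqueness. -/
lemma digits_unique : ∀ (r B : ℕ) (d d' : Fin r → ℕ), (∀ t, d t < B) → (∀ t, d' t < B) →
    (∑ t, d t * B ^ (t : ℕ)) = (∑ t, d' t * B ^ (t : ℕ)) → d = d' := by
  intro r
  induction r with
  | zero => intro B d d' _ _ _; funext t; exact t.elim0
  | succ r ih =>
    intro B d d' hd hd' hsum
    have hB : 0 < B := Nat.pos_of_ne_zero (by rintro rfl; exact Nat.not_lt_zero _ (hd 0))
    have expand : ∀ e : Fin (r+1) → ℕ,
        (∑ t, e t * B ^ (t : ℕ)) = e 0 + B * ∑ t : Fin r, e t.succ * B ^ (t : ℕ) := by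
      intro e
      rw [Fin.sum_univ_succ, Finset.mul_sum]
      simp [pow_succ, mul_comm, mul_assoc, mul_left_comm]
    rw [expand d, expand d'] at hsum
    have h0 : d 0 = d' 0 := by
      have := congrArg (· % B) hsum
      simpa [Nat.add_mul_mod_self_left, Nat.mod_eq_of_lt (hd 0), Nat.mod_eq_of_lt (hd' 0)]
        using this
    rw [h0] at hsum
    have htail : (fun t : Fin r => d t.succ) = fun t : Fin r => d' t.succ := by
      apply ih B _ _ (fun t => hd t.succ) (fun t => hd' t.succ)
      have := Nat.add_left_cancel hsum
      exact Nat.eq_of_mul_eq_mul_left hB this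
    funext t
    refine Fin.cases h0 (fun i => ?_) t
    exact congrFun htail i

/-- Generalized Vandermonde: for injective exponents there are positive integer points
making the matrix `(x i ^ e j)` invertible. -/
lemma gen_vandermonde : ∀ (k : ℕ) (e : Fin k → ℕ), Function.Injective e →
    ∃ x : Fin k → ℕ, (∀ i, 1 ≤ x i) ∧
      (Matrix.of fun i j : Fin k => (x i : ℚ) ^ e j).det ≠ 0 := by
  intro k
  induction k with
  | zero =>
    intro e _
    exact ⟨fun i => 1, fun i => le_refl 1, by simp [Matrix.det_fin_zero]⟩
  | succ k ih =>
    intro e he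
    obtain ⟨x, hx1, hxdet⟩ := ih (fun j => e j.castSucc)
      (fun a b hab => Fin.castSucc_injective k (he hab))
    -- matrix with last row given by value c
    set A : ℚ → Matrix (Fin (k+1)) (Fin (k+1)) ℚ :=
      fun c => Matrix.of fun i j => (Fin.lastCases c (fun i' => (x i' : ℚ)) i) ^ e j with hA
    -- cofactors along the last row
    set coef : Fin (k+1) → ℚ := fun j =>
      (-1 : ℚ) ^ ((Fin.last k : ℕ) + (j : ℕ)) *
        ((A 0).submatrix (Fin.last k).succAbove j.succAbove).det with hcoef
    have hsub : ∀ (c : ℚ) (j : Fin (k+1)), ((A c).submatrix (Fin.last k).succAbove j.succAbove)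
        = (A 0).submatrix (Fin.last k).succAbove j.succAbove := by
      intro c j
      ext i' j'
      simp [hA, Matrix.submatrix_apply, Fin.succAbove_last]
    have hdet : ∀ c : ℚ, (A c).det = ∑ j, coef j * c ^ e j := by
      intro c
      rw [Matrix.det_succ_row (A c) (Fin.last k)]
      refine Finset.sum_congr rfl fun j _ => ?_
      rw [hsub c j]
      have : (A c) (Fin.last k) j = c ^ e j := by simp [hA]
      rw [this, hcoef]
      ring
    -- the polynomial ∑ coef j * X ^ e j
    set p : Polynomial ℚ := ∑ j, Polynomial.C (coef j) * Polynomial.X ^ e j with hp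
    have hpeval : ∀ c : ℚ, p.eval c = (A c).det := by
      intro c
      rw [hp, hdet c, Polynomial.eval_finset_sum]
      simp
    have hlastcoef : coef (Fin.last k) ≠ 0 := by
      simp only [hcoef]
      have : ((A 0).submatrix (Fin.last k).succAbove (Fin.last k).succAbove).det
          = (Matrix.of fun i j : Fin k => (x i : ℚ) ^ e j.castSucc).det := by
        congr 1
        ext i' j'
        simp [hA, Matrix.submatrix_apply, Fin.succAbove_last]
      rw [this]
      simp only [mul_ne_zero_iff]
      exact ⟨pow_ne_zero _ (by norm_num), hxdet⟩
    have hpne : p ≠ 0 := by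
      intro h0
      have : p.coeff (e (Fin.last k)) = coef (Fin.last k) := by
        rw [hp, Polynomial.finset_sum_coeff]
        rw [Finset.sum_eq_single (Fin.last k)]
        · simp
        · intro j _ hj
          have h1 : e j ≠ e (Fin.last k) := fun hcon => hj (he hcon)
          simp [Polynomial.coeff_C_mul, Polynomial.coeff_X_pow, h1, Ne.symm h1]
        · simp
      rw [h0] at this
      exact hlastcoef (by simpa using this.symm)
    -- find a positive natural non-root
    have : ∃ n : ℕ, p.eval ((n : ℚ) + 1) ≠ 0 := by
      by_contra hcon
      push_neg at hcon
      apply hpne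
      apply Polynomial.eq_zero_of_infinite_isRoot
      apply Set.infinite_of_injective_forall_mem
        (f := fun n : ℕ => (n : ℚ) + 1)
      · intro a b hab
        simpa using hab
      · intro n; exact hcon n
    obtain ⟨n, hn⟩ := this
    refine ⟨(Fin.snoc x (n + 1) : Fin (k+1) → ℕ), ?_, ?_⟩
    · intro i
      refine Fin.lastCases ?_ (fun i' => ?_) i
      · simp [Fin.snoc_last]
      · simpa [Fin.snoc_castSucc] using hx1 i'
    · have hMA : (Matrix.of fun i j : Fin (k+1) => (((Fin.snoc x (n+1) : Fin (k+1) → ℕ) i : ℕ) : ℚ) ^ e j)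
          = A ((n : ℚ) + 1) := by
        ext i j
        refine Fin.lastCases ?_ (fun i' => ?_) i
        · simp [hA, Fin.snoc_last]
        · simp [hA, Fin.snoc_castSucc]
      rw [hMA, ← hpeval]
      exact hn

/-- Given an enumeration γ₁,…,γ_k of all γ ∈ ℤ_{≥0}^r with γ·h = m, there are vectors
ν₁,…,ν_k of positive integers such that the k×k matrix (ν_i^{γ_j∘h})_{ij} is invertible. -/
theorem stmt17 (r m k : ℕ) (h : Fin r → ℕ) (hh : ∀ t, 1 ≤ h t)
    (γ : Fin k → Fin r → ℕ) (hinj : Function.Injective γ)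
    (hsol : ∀ j, ∑ t, γ j t * h t = m)
    (hall : ∀ g : Fin r → ℕ, (∑ t, g t * h t = m) → ∃ j, γ j = g) :
    ∃ ν : Fin k → Fin r → ℕ, (∀ i t, 1 ≤ ν i t) ∧
      (Matrix.of fun i j : Fin k => ∏ t, (ν i t : ℚ) ^ (γ j t * h t)).det ≠ 0 := by
  -- digits of the exponent vector in base m+1
  set e : Fin k → ℕ := fun j => ∑ t, (γ j t * h t) * (m+1) ^ (t : ℕ) with he
  have hdig : ∀ j t, γ j t * h t < m + 1 := by
    intro j t
    have : γ j t * h t ≤ m := by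
      rw [← hsol j]
      exact Finset.single_le_sum (f := fun t => γ j t * h t) (fun t _ => Nat.zero_le _) (Finset.mem_univ t)
    omega
  have heinj : Function.Injective e := by
    intro a b hab
    have : (fun t => γ a t * h t) = fun t => γ b t * h t :=
      digits_unique r (m+1) _ _ (hdig a) (hdig b) hab
    apply hinj
    funext t
    have := congrFun this t
    exact Nat.eq_of_mul_eq_mul_right (hh t) this
  obtain ⟨x, hx1, hxdet⟩ := gen_vandermonde k e heinj
  refine ⟨fun i t => x i ^ ((m+1) ^ (t : ℕ)), ?_, ?_⟩
  · intro i t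
    exact Nat.one_le_pow _ _ (hx1 i)
  · have : (Matrix.of fun i j : Fin k =>
        ∏ t : Fin r, ((x i ^ ((m+1) ^ (t : ℕ)) : ℕ) : ℚ) ^ (γ j t * h t))
        = Matrix.of fun i j : Fin k => (x i : ℚ) ^ e j := by
      ext i j
      simp only [Matrix.of_apply, he]
      rw [← Finset.prod_pow_eq_pow_sum]
      refine Finset.prod_congr rfl fun t _ => ?_
      push_cast
      rw [← pow_mul]
      congr 1
      ring
    rw [this]
    exact hxdet
end
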